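/- For every y ∈ [−1/2, 0] the cubic equation μ³ − (4+2y)μ² − (4+8y)μ − 8y = 0 has a unique solution μ(y) ∈ [0,2], characterized by y = −2v₁² + 6v₁ − 5 + 1/v₁ with v₁ = 2/(2+μ(y)); moreover, every bivariate copula C with ψ(C) = y satisfies ξ(C) ≥ −4v₁² + 20v₁ − 17 + 2/v₁ − 1/v₁² − 12·ln(v₁), where v₁ = 2/(2+μ(y)). -/

import Mathlib

open MeasureTheory Set

noncomputable section

def IsCopula (C : ℝ → ℝ → ℝ) : Prop :=
  (∀ u ∈ Icc (0:ℝ) 1, ∀ v ∈ Icc (0:ℝ) 1, C u v ∈ Icc (0:ℝ) 1) ∧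
  (∀ u ∈ Icc (0:ℝ) 1, C u 0 = 0 ∧ C u 1 = u) ∧
  (∀ v ∈ Icc (0:ℝ) 1, C 0 v = 0 ∧ C 1 v = v) ∧
  (∀ u₁ ∈ Icc (0:ℝ) 1, ∀ u₂ ∈ Icc (0:ℝ) 1, ∀ v₁ ∈ Icc (0:ℝ) 1, ∀ v₂ ∈ Icc (0:ℝ) 1,
    u₁ ≤ u₂ → v₁ ≤ v₂ → 0 ≤ C u₂ v₂ - C u₁ v₂ - C u₂ v₁ + C u₁ v₁)

/-- The (a.e. defined) partial derivative of `C` with respect to its first argument. -/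
def d1 (C : ℝ → ℝ → ℝ) (t v : ℝ) : ℝ := deriv (fun s => C s v) t

/-- Chatterjee's rank correlation. -/
def xi (C : ℝ → ℝ → ℝ) : ℝ :=
  6 * (∫ v in (0:ℝ)..1, ∫ t in (0:ℝ)..1, (d1 C t v) ^ 2) - 2

/-- Spearman's footrule. -/
def psi (C : ℝ → ℝ → ℝ) : ℝ :=
  6 * (∫ v in (0:ℝ)..1, C v v) - 2

/-- Stochastically increasing: for each `v`, `t ↦ ∂₁C(t,v)` agrees a.e. on `[0,1]`
with a non-increasing function. -/
def IsSI (C : ℝ → ℝ → ℝ) : Prop :=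
  ∀ v ∈ Icc (0:ℝ) 1, ∃ g : ℝ → ℝ, AntitoneOn g (Icc (0:ℝ) 1) ∧
    (∀ᵐ t ∂(volume.restrict (Icc (0:ℝ) 1)), d1 C t v = g t)

open Filter Topology


/-- derivative of a monotone function at a differentiability point is nonneg -/
lemma mono_deriv_nonneg (G : ℝ → ℝ) (hm : Monotone G) (t : ℝ) : 0 ≤ deriv G t := by
  by_cases h : DifferentiableAt ℝ G t
  · have hs : Tendsto (slope G t) (𝓝[>] t) (𝓝 (deriv G t)) := by
      have := (hasDerivAt_iff_tendsto_slope.1 h.hasDerivAt)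
      exact this.mono_left (nhdsWithin_mono t (fun x hx => ne_of_gt hx))
    refine ge_of_tendsto hs ?_
    · filter_upwards [self_mem_nhdsWithin] with x hx
      rw [slope_def_field]
      exact div_nonneg (sub_nonneg.2 (hm (le_of_lt hx))) (sub_nonneg.2 (le_of_lt hx))
  · simp [deriv_zero_of_not_differentiableAt h]

lemma integral_deriv_le_of_monotone (G : ℝ → ℝ) (hm : Monotone G) (hc : Continuous G)
    (a b : ℝ) (hab : a ≤ b) : ∫ t in a..b, deriv G t ≤ G b - G a := by
  set c : ℕ → ℝ := fun n => ((n : ℝ) + 1)⁻¹ with hc_def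
  have hcpos : ∀ n, 0 < c n := fun n => by positivity
  have hclim : Tendsto c atTop (𝓝 0) := by
    simpa [hc_def] using tendsto_one_div_add_atTop_nhds_zero_nat (𝕜 := ℝ)
  -- difference quotients
  set q : ℕ → ℝ → ℝ := fun n t => (G (t + c n) - G t) / c n with hq_def
  have hqmeas : ∀ n, Measurable fun t => ENNReal.ofReal (q n t) := by
    intro n
    exact ((((hc.comp (continuous_id.add continuous_const)).sub hc).div_const _)).measurable.ennreal_ofReal
  -- a.e. convergence of ofReal (q n t) to ofReal (deriv G t)
  have hae : ∀ᵐ t, ENNReal.ofReal (deriv G t)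
      = Filter.liminf (fun n => ENNReal.ofReal (q n t)) atTop := by
    filter_upwards [hm.ae_differentiableAt] with t ht
    have hs : Tendsto (slope G t) (𝓝[≠] t) (𝓝 (deriv G t)) :=
      hasDerivAt_iff_tendsto_slope.1 ht.hasDerivAt
    have hseq : Tendsto (fun n => t + c n) atTop (𝓝[≠] t) := by
      refine tendsto_nhdsWithin_of_tendsto_nhds_of_eventually_within _ ?_ ?_
      · simpa using (tendsto_const_nhds.add hclim)
      · filter_upwards with n
        simp only [mem_compl_iff, mem_singleton_iff]
        intro h
        have := hcpos n
        nlinarith [congrArg (fun x => x - t) h]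
    have hq : Tendsto (fun n => q n t) atTop (𝓝 (deriv G t)) := by
      have := hs.comp hseq
      convert this using 2 with n
      simp [hq_def, slope, vsub_eq_sub, div_eq_inv_mul]
    exact ((ENNReal.continuous_ofReal.tendsto _).comp hq).liminf_eq.symm
  have hGint : ∀ u w : ℝ, IntervalIntegrable G volume u w := fun u w =>
    hc.intervalIntegrable u w
  have hqint : ∀ n, IntervalIntegrable (q n) volume a b := fun n =>
    (((hc.comp (continuous_id.add continuous_const)).sub hc).div_const _).intervalIntegrable a b
  -- bound the integral of q n
  have hqbound : ∀ n, ∫ t in a..b, q n t ≤ G (b + c n) - G a := by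
    intro n
    have h1 : ∫ t in a..b, q n t = (∫ t in a..b, (G (t + c n) - G t)) / c n := by
      rw [← intervalIntegral.integral_div]
    have h2 : ∫ t in a..b, (G (t + c n) - G t)
        = (∫ t in b..(b + c n), G t) - ∫ t in a..(a + c n), G t := by
      have hcont' : Continuous fun t : ℝ => G (t + c n) := hc.comp (by continuity)
      rw [intervalIntegral.integral_sub (hcont'.intervalIntegrable a b) (hGint a b)]
      rw [intervalIntegral.integral_comp_add_right]
      have e1 : (∫ t in (a + c n)..(b + c n), G t) + (∫ t in (b + c n)..b, G t)
          = ∫ t in (a + c n)..b, G t :=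
        intervalIntegral.integral_add_adjacent_intervals (hGint _ _) (hGint _ _)
      have e2 : (∫ t in a..(a + c n), G t) + (∫ t in (a + c n)..b, G t)
          = ∫ t in a..b, G t :=
        intervalIntegral.integral_add_adjacent_intervals (hGint _ _) (hGint _ _)
      have e3 : (∫ t in (b + c n)..b, G t) = - ∫ t in b..(b + c n), G t :=
        intervalIntegral.integral_symm b (b + c n)
      linarith
    have h3 : ∫ t in b..(b + c n), G t ≤ c n * G (b + c n) := by
      have := intervalIntegral.integral_mono_on (by linarith [hcpos n] : b ≤ b + c n)
        (hGint b (b + c n)) (intervalIntegrable_const) (fun x hx => hm hx.2)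
      simpa [smul_eq_mul, mul_comm] using this
    have h4 : c n * G a ≤ ∫ t in a..(a + c n), G t := by
      have := intervalIntegral.integral_mono_on (by linarith [hcpos n] : a ≤ a + c n)
        (intervalIntegrable_const) (hGint a (a + c n)) (fun x hx => hm hx.1)
      simpa [smul_eq_mul, mul_comm] using this
    rw [h1]
    rw [div_le_iff₀ (hcpos n)]
    have hmono : G (b + c n) - G a ≥ 0 := sub_nonneg.2 (hm (by linarith [hcpos n]))
    nlinarith [hcpos n]
  have hqnn : ∀ n t, 0 ≤ q n t := fun n t =>
    div_nonneg (sub_nonneg.2 (hm (by linarith [hcpos n]))) (hcpos n).le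
  -- lintegral bound
  have hlbound : ∀ n, (∫⁻ t in Icc a b, ENNReal.ofReal (q n t))
      ≤ ENNReal.ofReal (G (b + c n) - G a) := by
    intro n
    have hint : IntegrableOn (q n) (Icc a b) := by
      have := (hqint n).1
      rw [integrableOn_Icc_iff_integrableOn_Ioc]
      simpa [intervalIntegrable_iff_integrableOn_Ioc_of_le hab] using hqint n
    rw [← ofReal_integral_eq_lintegral_ofReal hint (Filter.Eventually.of_forall (hqnn n))]
    apply ENNReal.ofReal_le_ofReal
    calc ∫ t in Icc a b, q n t = ∫ t in Ioc a b, q n t := integral_Icc_eq_integral_Ioc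
      _ = ∫ t in a..b, q n t := (intervalIntegral.integral_of_le hab).symm
      _ ≤ G (b + c n) - G a := hqbound n
  -- Fatou
  have hfatou : (∫⁻ t in Icc a b, ENNReal.ofReal (deriv G t))
      ≤ ENNReal.ofReal (G b - G a) := by
    have step1 : (∫⁻ t in Icc a b, ENNReal.ofReal (deriv G t))
        = ∫⁻ t in Icc a b, Filter.liminf (fun n => ENNReal.ofReal (q n t)) atTop := by
      apply lintegral_congr_ae
      exact ae_restrict_of_ae hae
    rw [step1]
    calc (∫⁻ t in Icc a b, Filter.liminf (fun n => ENNReal.ofReal (q n t)) atTop)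
        ≤ Filter.liminf (fun n => ∫⁻ t in Icc a b, ENNReal.ofReal (q n t)) atTop :=
          lintegral_liminf_le (fun n => hqmeas n)
      _ ≤ Filter.liminf (fun n => ENNReal.ofReal (G (b + c n) - G a)) atTop := by
          apply Filter.liminf_le_liminf (Filter.Eventually.of_forall hlbound)
      _ = ENNReal.ofReal (G b - G a) := by
          apply Filter.Tendsto.liminf_eq
          apply (ENNReal.continuous_ofReal.tendsto _).comp
          have : Tendsto (fun n => b + c n) atTop (𝓝 b) := by
            simpa using (tendsto_const_nhds.add hclim)
          exact ((hc.tendsto b).comp this).sub tendsto_const_nhds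
  -- convert to Bochner integral
  have hderiv_nn : ∀ t, 0 ≤ deriv G t := mono_deriv_nonneg G hm
  have heq : ∫ t in a..b, deriv G t
      = (∫⁻ t in Icc a b, ENNReal.ofReal (deriv G t)).toReal := by
    rw [intervalIntegral.integral_of_le hab, ← integral_Icc_eq_integral_Ioc]
    rw [integral_eq_lintegral_of_nonneg_ae (Filter.Eventually.of_forall hderiv_nn)
      (measurable_deriv G).aestronglyMeasurable]
  rw [heq]
  calc (∫⁻ t in Icc a b, ENNReal.ofReal (deriv G t)).toReal
      ≤ (ENNReal.ofReal (G b - G a)).toReal :=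
        ENNReal.toReal_mono ENNReal.ofReal_ne_top hfatou
    _ = G b - G a := ENNReal.toReal_ofReal (sub_nonneg.2 (hm hab))

lemma deriv_mem_Icc (f : ℝ → ℝ) (hm : Monotone f)
    (hlip : Monotone (fun t => t - f t)) (t : ℝ) : deriv f t ∈ Icc (0:ℝ) 1 := by
  constructor
  · exact mono_deriv_nonneg f hm t
  · by_cases h : DifferentiableAt ℝ f t
    · have hg : deriv (fun s => s - f s) t = 1 - deriv f t := by
        rw [deriv_fun_sub (f := fun s => s) differentiableAt_id h, deriv_id'']
      have := mono_deriv_nonneg _ hlip t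
      rw [hg] at this; linarith
    · simp [deriv_zero_of_not_differentiableAt h]

lemma sub_le_integral_deriv (f : ℝ → ℝ) (hm : Monotone f)
    (hlip : Monotone (fun t => t - f t)) (hc : Continuous f)
    (a b : ℝ) (hab : a ≤ b) : f b - f a ≤ ∫ t in a..b, deriv f t := by
  set g : ℝ → ℝ := fun t => t - f t with hg_def
  have hgc : Continuous g := continuous_id.sub hc
  have h1 : ∫ t in a..b, deriv g t ≤ g b - g a :=
    integral_deriv_le_of_monotone g hlip hgc a b hab
  have hint : IntervalIntegrable (deriv f) volume a b := by
    rw [intervalIntegrable_iff]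
    refine Integrable.mono' (g := fun _ => (1:ℝ))
      (integrableOn_const measure_Ioc_lt_top.ne)
      (measurable_deriv f).aestronglyMeasurable (ae_of_all _ fun t => ?_)
    rw [Real.norm_eq_abs, abs_le]
    have := deriv_mem_Icc f hm hlip t
    exact ⟨by linarith [this.1], this.2⟩
  have h2 : ∫ t in a..b, deriv g t = (b - a) - ∫ t in a..b, deriv f t := by
    have hae : ∀ᵐ t, t ∈ Set.uIoc a b → deriv g t = 1 - deriv f t := by
      filter_upwards [hm.ae_differentiableAt] with t ht _
      rw [hg_def]
      rw [deriv_fun_sub (f := fun s => s) differentiableAt_id ht, deriv_id'']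
    rw [intervalIntegral.integral_congr_ae hae,
      intervalIntegral.integral_sub intervalIntegrable_const hint]
    simp [smul_eq_mul]
  have : g b - g a = (b - a) - (f b - f a) := by simp [hg_def]; ring
  linarith

lemma deriv_intervalIntegrable (f : ℝ → ℝ) (hm : Monotone f)
    (hlip : Monotone (fun t => t - f t)) (a b : ℝ) :
    IntervalIntegrable (deriv f) volume a b := by
  rw [intervalIntegrable_iff]
  refine Integrable.mono' (g := fun _ => (1:ℝ))
    (integrableOn_const measure_Ioc_lt_top.ne)
    (measurable_deriv f).aestronglyMeasurable (ae_of_all _ fun t => ?_)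
  rw [Real.norm_eq_abs, abs_le]
  have := deriv_mem_Icc f hm hlip t
  exact ⟨by linarith [this.1], this.2⟩

lemma derivsq_intervalIntegrable (f : ℝ → ℝ) (hm : Monotone f)
    (hlip : Monotone (fun t => t - f t)) (a b : ℝ) :
    IntervalIntegrable (fun t => (deriv f t)^2) volume a b := by
  rw [intervalIntegrable_iff]
  refine Integrable.mono' (g := fun _ => (1:ℝ))
    (integrableOn_const measure_Ioc_lt_top.ne)
    ((measurable_deriv f).pow_const 2).aestronglyMeasurable (ae_of_all _ fun t => ?_)
  rw [Real.norm_eq_abs, abs_le]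
  have := deriv_mem_Icc f hm hlip t
  constructor <;> nlinarith [this.1, this.2]

lemma seg_bound (f : ℝ → ℝ) (hm : Monotone f) (hlip : Monotone (fun t => t - f t))
    (hc : Continuous f) (a b s : ℝ) (hab : a ≤ b) (hs : 0 ≤ s) :
    2*s*(f b - f a) - s^2*(b-a) ≤ ∫ t in a..b, (deriv f t)^2 := by
  have hint := deriv_intervalIntegrable f hm hlip a b
  have hint2 := derivsq_intervalIntegrable f hm hlip a b
  have step1 : ∫ t in a..b, (2*s*(deriv f t) - s^2) ≤ ∫ t in a..b, (deriv f t)^2 := by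
    apply intervalIntegral.integral_mono_on hab ((hint.const_mul _).sub intervalIntegrable_const) hint2
    intro x _
    nlinarith [sq_nonneg (deriv f x - s)]
  have step2 : ∫ t in a..b, (2*s*(deriv f t) - s^2)
      = 2*s*(∫ t in a..b, deriv f t) - s^2*(b-a) := by
    rw [intervalIntegral.integral_sub (hint.const_mul _) intervalIntegrable_const,
      intervalIntegral.integral_const_mul, intervalIntegral.integral_const]
    simp [smul_eq_mul]; ring
  have step3 : f b - f a ≤ ∫ t in a..b, deriv f t :=
    sub_le_integral_deriv f hm hlip hc a b hab
  nlinarith [step3]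

lemma sq_integral_lower (f : ℝ → ℝ) (hm : Monotone f) (hlip : Monotone (fun t => t - f t))
    (hc : Continuous f) (v : ℝ) (hv : v ∈ Set.Ioo (0:ℝ) 1) :
    (f v - f 0)^2 / v + (f 1 - f v)^2 / (1 - v) ≤ ∫ t in (0:ℝ)..1, (deriv f t)^2 := by
  obtain ⟨hv0, hv1⟩ := hv
  have hsplit : (∫ t in (0:ℝ)..v, (deriv f t)^2) + (∫ t in v..(1:ℝ), (deriv f t)^2)
      = ∫ t in (0:ℝ)..1, (deriv f t)^2 :=
    intervalIntegral.integral_add_adjacent_intervals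
      (derivsq_intervalIntegrable f hm hlip 0 v) (derivsq_intervalIntegrable f hm hlip v 1)
  have hs1 : (0:ℝ) ≤ (f v - f 0)/v := div_nonneg (sub_nonneg.2 (hm hv0.le)) hv0.le
  have hs2 : (0:ℝ) ≤ (f 1 - f v)/(1-v) := div_nonneg (sub_nonneg.2 (hm hv1.le)) (by linarith)
  have b1 := seg_bound f hm hlip hc 0 v ((f v - f 0)/v) hv0.le hs1
  have b2 := seg_bound f hm hlip hc v 1 ((f 1 - f v)/(1-v)) hv1.le hs2
  have e1 : 2*((f v - f 0)/v)*(f v - f 0) - ((f v - f 0)/v)^2*(v-0) = (f v - f 0)^2 / v := by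
    field_simp; ring
  have e2 : 2*((f 1 - f v)/(1-v))*(f 1 - f v) - ((f 1 - f v)/(1-v))^2*(1-v) = (f 1 - f v)^2 / (1-v) := by
    have : (1:ℝ) - v ≠ 0 := by linarith
    field_simp; ring
  rw [e1] at b1; rw [e2] at b2
  linarith

noncomputable def rho (b : ℝ) : ℝ → ℝ := fun v =>
  if v ≤ 1 - b then v^2/(1-v)
  else if v ≤ b then (1-(b-1)/b)^2 * v^2 - ((b-1)/b)^2 * v
  else (2*v-1)^2/v + (1-v) - 2*((b-1)/b)*(2*v-1)

lemma rho_key (b : ℝ) (hb1 : 1/2 ≤ b) (hb2 : b ≤ 1) (v c : ℝ) (hv : v ∈ Set.Ioo (0:ℝ) 1)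
    (hc1 : 0 ≤ c) (hc2 : 2*v-1 ≤ c) (hc3 : c ≤ v) :
    2*((b-1)/b)*c + rho b v ≤ c^2/v + (v-c)^2/(1-v) := by
  obtain ⟨hv0, hv1⟩ := hv
  have hb0 : (0:ℝ) < b := by linarith
  have h1v : (0:ℝ) < 1 - v := by linarith
  rw [rho]
  split_ifs with h1 h2
  · -- v ≤ 1 - b
    have key : c^2/v + (v-c)^2/(1-v) - (2*((b-1)/b)*c + v^2/(1-v))
        = (b*c^2 + 2*v*c*((1-b)*(1-v)-b*v))/(v*(1-v)*b) := by
      field_simp; ring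
    have hN : 0 ≤ b*c^2 + 2*v*c*((1-b)*(1-v)-b*v) := by
      have hB : 0 ≤ (1-b)*(1-v)-b*v := by nlinarith
      have := mul_nonneg (mul_nonneg (by linarith : (0:ℝ) ≤ 2*v) hc1) hB
      nlinarith
    have hD : 0 < v*(1-v)*b := by positivity
    nlinarith [div_nonneg hN hD.le]
  · -- 1 - b < v ≤ b
    have key : c^2/v + (v-c)^2/(1-v)
        - (2*((b-1)/b)*c + ((1-(b-1)/b)^2 * v^2 - ((b-1)/b)^2 * v))
        = (b*c - b*v^2 - (b-1)*v*(1-v))^2/(v*(1-v)*b^2) := by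
      field_simp; ring
    have hD : 0 < v*(1-v)*b^2 := by positivity
    nlinarith [div_nonneg (sq_nonneg (b*c - b*v^2 - (b-1)*v*(1-v))) hD.le]
  · -- b < v
    have key : c^2/v + (v-c)^2/(1-v)
        - (2*((b-1)/b)*c + ((2*v-1)^2/v + (1-v) - 2*((b-1)/b)*(2*v-1)))
        = (b*(c-(2*v-1))^2 + 2*(1-v)*(v-b)*(c-(2*v-1)))/(v*(1-v)*b) := by
      field_simp; ring
    have hN : 0 ≤ b*(c-(2*v-1))^2 + 2*(1-v)*(v-b)*(c-(2*v-1)) := by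
      have h3 : b < v := by push_neg at h2; exact h2
      have := mul_nonneg (mul_nonneg (mul_nonneg (by linarith : (0:ℝ) ≤ 2) h1v.le)
        (by linarith : (0:ℝ) ≤ v - b)) (by linarith : (0:ℝ) ≤ c - (2*v-1))
      nlinarith
    have hD : 0 < v*(1-v)*b := by positivity
    nlinarith [div_nonneg hN hD.le]

lemma rho_int1 (b : ℝ) (hb1 : 1/2 ≤ b) (hb2 : b ≤ 1) :
    ∫ v in (0:ℝ)..(1-b), rho b v = -(1-b)^2/2 - (1-b) - Real.log b := by
  have hb0 : (0:ℝ) < b := by linarith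
  have h01 : (0:ℝ) ≤ 1 - b := by linarith
  have hcongr : ∀ v ∈ Set.uIcc (0:ℝ) (1-b), rho b v = v^2/(1-v) := by
    intro v hv
    rw [Set.uIcc_of_le h01] at hv
    rw [rho, if_pos hv.2]
  rw [intervalIntegral.integral_congr hcongr]
  have hderiv : ∀ v ∈ Set.uIcc (0:ℝ) (1-b),
      HasDerivAt (fun v => -v^2/2 - v - Real.log (1-v)) (v^2/(1-v)) v := by
    intro v hv
    rw [Set.uIcc_of_le h01] at hv
    have hv1 : (0:ℝ) < 1 - v := by
      rcases hv with ⟨h1, h2⟩; linarith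
    have h1 : HasDerivAt (fun v : ℝ => 1 - v) (-1) v := by
      simpa using (hasDerivAt_id v).const_sub 1
    have h2 : HasDerivAt (fun v : ℝ => Real.log (1-v)) (-1/(1-v)) v := by
      have := (Real.hasDerivAt_log (ne_of_gt hv1)).comp v h1
      simpa [div_eq_mul_inv, mul_comm, Function.comp_def] using this
    have h3 : HasDerivAt (fun v : ℝ => -v^2/2 - v) (-v - 1) v := by
      have : HasDerivAt (fun v : ℝ => -v^2/2 - v) (-(2*v^(2-1))/2 - 1) v := by
        exact (((hasDerivAt_pow 2 v).neg.div_const 2)).sub (hasDerivAt_id v)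
      convert this using 1; ring
    have := h3.sub h2
    refine this.congr_deriv ?_
    have hne : (1:ℝ) - v ≠ 0 := ne_of_gt hv1
    field_simp
    ring
  rw [intervalIntegral.integral_eq_sub_of_hasDerivAt hderiv]
  · simp only [sub_sub_cancel]
    norm_num
  · apply ContinuousOn.intervalIntegrable
    apply ContinuousOn.div
    · fun_prop
    · fun_prop
    · intro v hv
      rw [Set.uIcc_of_le h01] at hv
      rcases hv with ⟨h1, h2⟩
      intro hcon
      have : v = 1 := by linarith
      linarith [h2, this]

lemma rho_int2 (b : ℝ) (hb1 : 1/2 ≤ b) (hb2 : b ≤ 1) :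
    ∫ v in (1-b)..b, rho b v
      = (1-(b-1)/b)^2 * (b^3-(1-b)^3)/3 - ((b-1)/b)^2 * (b^2-(1-b)^2)/2 := by
  have hb0 : (0:ℝ) < b := by linarith
  have hlb : (1:ℝ) - b ≤ b := by linarith
  have hcongr : ∀ v ∈ Set.uIcc (1-b) b, rho b v = (1-(b-1)/b)^2 * v^2 - ((b-1)/b)^2 * v := by
    intro v hv
    rw [Set.uIcc_of_le hlb] at hv
    rw [rho]
    split_ifs with h1 h2
    · have hveq : v = 1 - b := le_antisymm h1 hv.1
      subst hveq
      rw [sub_sub_cancel]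
      field_simp
      ring
    · rfl
    · exact absurd hv.2 h2
  rw [intervalIntegral.integral_congr hcongr]
  have hderiv : ∀ v ∈ Set.uIcc (1-b) b,
      HasDerivAt (fun v => (1-(b-1)/b)^2 * v^3/3 - ((b-1)/b)^2 * v^2/2)
        ((1-(b-1)/b)^2 * v^2 - ((b-1)/b)^2 * v) v := by
    intro v _
    have h1 : HasDerivAt (fun v : ℝ => v^3) (3*v^2) v := by
      simpa using hasDerivAt_pow 3 v
    have h2 : HasDerivAt (fun v : ℝ => v^2) (2*v) v := by
      simpa using hasDerivAt_pow 2 v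
    have := ((h1.const_mul ((1-(b-1)/b)^2)).div_const 3).sub
      ((h2.const_mul (((b-1)/b)^2)).div_const 2)
    refine this.congr_deriv ?_
    ring
  rw [intervalIntegral.integral_eq_sub_of_hasDerivAt hderiv]
  · ring
  · apply ContinuousOn.intervalIntegrable
    fun_prop

lemma rho_int3 (b : ℝ) (hb1 : 1/2 ≤ b) (hb2 : b ≤ 1) :
    ∫ v in b..(1:ℝ), rho b v
      = -3/2 - ((3/2)*b^2 - 3*b + Real.log b - 2*((b-1)/b)*b^2 + 2*((b-1)/b)*b) := by
  have hb0 : (0:ℝ) < b := by linarith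
  set κ := (b-1)/b with hκ
  have hcongr : ∀ v ∈ Set.uIcc b (1:ℝ), rho b v = (2*v-1)^2/v + (1-v) - 2*κ*(2*v-1) := by
    intro v hv
    rw [Set.uIcc_of_le hb2] at hv
    have hv0 : (0:ℝ) < v := by linarith [hv.1]
    rw [rho]
    split_ifs with h1 h2
    · have hb12 : b = 1/2 := by linarith [hv.1]
      have hveq : v = 1/2 := by rw [hb12] at h1; linarith [hv.1]
      subst hb12; subst hveq; norm_num [hκ]
    · have hveq : v = b := le_antisymm h2 hv.1
      subst hveq
      rw [hκ]
      field_simp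
      ring
    · rfl
  rw [intervalIntegral.integral_congr hcongr]
  have hderiv : ∀ v ∈ Set.uIcc b (1:ℝ),
      HasDerivAt (fun v => (3/2)*v^2 - 3*v + Real.log v - 2*κ*v^2 + 2*κ*v)
        ((2*v-1)^2/v + (1-v) - 2*κ*(2*v-1)) v := by
    intro v hv
    rw [Set.uIcc_of_le hb2] at hv
    have hv0 : (0:ℝ) < v := by linarith [hv.1]
    have h2 : HasDerivAt (fun x : ℝ => x^2) (2*v) v := by
      simpa using hasDerivAt_pow 2 v
    have hlog : HasDerivAt Real.log v⁻¹ v := Real.hasDerivAt_log (ne_of_gt hv0)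
    have A : HasDerivAt (fun x : ℝ => (3/2)*x^2 - 3*x + Real.log x - 2*κ*x^2 + 2*κ*x)
        ((3/2)*(2*v) - 3*1 + v⁻¹ - 2*κ*(2*v) + 2*κ*1) v :=
      ((((h2.const_mul ((3:ℝ)/2)).sub ((hasDerivAt_id v).const_mul 3)).add hlog).sub
        (h2.const_mul (2*κ))).add ((hasDerivAt_id v).const_mul (2*κ))
    have hEq : (2*v-1)^2/v + (1-v) - 2*κ*(2*v-1)
        = (3/2)*(2*v) - 3*1 + v⁻¹ - 2*κ*(2*v) + 2*κ*1 := by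
      field_simp
      ring
    rw [hEq]
    exact A
  rw [intervalIntegral.integral_eq_sub_of_hasDerivAt hderiv]
  · simp only [Real.log_one, one_pow, mul_one]
    ring
  · apply ContinuousOn.intervalIntegrable
    apply ContinuousOn.sub
    apply ContinuousOn.add
    · apply ContinuousOn.div
      · fun_prop
      · fun_prop
      · intro v hv
        rw [Set.uIcc_of_le hb2] at hv
        have : (0:ℝ) < v := by linarith [hv.1]
        exact ne_of_gt this
    · fun_prop
    · fun_prop

def cl (x : ℝ) : ℝ := max 0 (min 1 x)

lemma cl_mem (x : ℝ) : cl x ∈ Icc (0:ℝ) 1 := by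
  unfold cl
  constructor
  · exact le_max_left _ _
  · rcases le_total (1:ℝ) x with h | h <;> rcases le_total (0:ℝ) x with h' | h' <;>
      simp [max_def, min_def] <;> split_ifs <;> linarith

lemma cl_eq {x : ℝ} (hx : x ∈ Icc (0:ℝ) 1) : cl x = x := by
  unfold cl
  rw [min_eq_right hx.2, max_eq_right hx.1]

lemma cl_mono : Monotone cl := fun s t h =>
  max_le_max le_rfl (min_le_min le_rfl h)

lemma cl_lip {s t : ℝ} (h : s ≤ t) : cl t - cl s ≤ t - s := by
  unfold cl
  simp only [max_def, min_def]
  split_ifs <;> linarith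

section CopulaFacts
variable {C : ℝ → ℝ → ℝ}

lemma cop_mono_u (hC : IsCopula C) : ∀ v ∈ Icc (0:ℝ) 1, ∀ u₁ ∈ Icc (0:ℝ) 1, ∀ u₂ ∈ Icc (0:ℝ) 1,
    u₁ ≤ u₂ → C u₁ v ≤ C u₂ v := by
  obtain ⟨hr, hu, hv, h2⟩ := hC
  intro v hv' u₁ hu₁ u₂ hu₂ h12
  have := h2 u₁ hu₁ u₂ hu₂ 0 ⟨le_refl 0, zero_le_one⟩ v hv' h12 hv'.1
  have e1 := (hu u₁ hu₁).1
  have e2 := (hu u₂ hu₂).1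
  linarith

lemma cop_lip_u (hC : IsCopula C) : ∀ v ∈ Icc (0:ℝ) 1, ∀ u₁ ∈ Icc (0:ℝ) 1, ∀ u₂ ∈ Icc (0:ℝ) 1,
    u₁ ≤ u₂ → C u₂ v - C u₁ v ≤ u₂ - u₁ := by
  obtain ⟨hr, hu, hv, h2⟩ := hC
  intro v hv' u₁ hu₁ u₂ hu₂ h12
  have := h2 u₁ hu₁ u₂ hu₂ v hv' 1 ⟨zero_le_one, le_refl 1⟩ h12 hv'.2
  have e1 := (hu u₁ hu₁).2
  have e2 := (hu u₂ hu₂).2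
  linarith

lemma cop_mono_v (hC : IsCopula C) : ∀ u ∈ Icc (0:ℝ) 1, ∀ v₁ ∈ Icc (0:ℝ) 1, ∀ v₂ ∈ Icc (0:ℝ) 1,
    v₁ ≤ v₂ → C u v₁ ≤ C u v₂ := by
  obtain ⟨hr, hu, hv, h2⟩ := hC
  intro u hu' v₁ hv₁ v₂ hv₂ h12
  have := h2 0 ⟨le_refl 0, zero_le_one⟩ u hu' v₁ hv₁ v₂ hv₂ hu'.1 h12
  have e1 := (hv v₁ hv₁).1
  have e2 := (hv v₂ hv₂).1
  linarith

lemma cop_lip_v (hC : IsCopula C) : ∀ u ∈ Icc (0:ℝ) 1, ∀ v₁ ∈ Icc (0:ℝ) 1, ∀ v₂ ∈ Icc (0:ℝ) 1,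
    v₁ ≤ v₂ → C u v₂ - C u v₁ ≤ v₂ - v₁ := by
  obtain ⟨hr, hu, hv, h2⟩ := hC
  intro u hu' v₁ hv₁ v₂ hv₂ h12
  have := h2 u hu' 1 ⟨zero_le_one, le_refl 1⟩ v₁ hv₁ v₂ hv₂ hu'.2 h12
  have e1 := (hv v₁ hv₁).2
  have e2 := (hv v₂ hv₂).2
  linarith

lemma cop_diag_le (hC : IsCopula C) (v : ℝ) (hv : v ∈ Icc (0:ℝ) 1) : C v v ≤ v := by
  have h := cop_mono_v hC v hv v hv 1 ⟨zero_le_one, le_refl 1⟩ hv.2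
  have e := (hC.2.1 v hv).2
  linarith

lemma cop_diag_ge (hC : IsCopula C) (v : ℝ) (hv : v ∈ Icc (0:ℝ) 1) : 2*v - 1 ≤ C v v := by
  obtain ⟨hr, hu, hvb, h2⟩ := hC
  have h1 : (1:ℝ) ∈ Icc (0:ℝ) 1 := ⟨zero_le_one, le_refl 1⟩
  have := h2 v hv 1 h1 v hv 1 h1 hv.2 hv.2
  have e1 := (hvb 1 h1).2
  have e2 := (hvb v hv).2
  have e3 := (hu v hv).2
  linarith

lemma cop_diag_nonneg (hC : IsCopula C) (v : ℝ) (hv : v ∈ Icc (0:ℝ) 1) : 0 ≤ C v v := by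
  have e := (hC.2.2.1 v hv).1
  have := cop_mono_u hC v hv 0 ⟨le_refl 0, zero_le_one⟩ v hv hv.1
  linarith

end CopulaFacts

def FF (C : ℝ → ℝ → ℝ) : ℝ → ℝ → ℝ := fun v t => C (cl t) (cl v)

variable {C : ℝ → ℝ → ℝ}

lemma cl_abs (x y : ℝ) : |cl x - cl y| ≤ |x - y| := by
  rcases le_total x y with h | h
  · rw [abs_sub_comm, abs_of_nonneg (sub_nonneg.2 (cl_mono h)), abs_sub_comm x y,
      abs_of_nonneg (sub_nonneg.2 h)]
    exact cl_lip h
  · rw [abs_of_nonneg (sub_nonneg.2 (cl_mono h)), abs_of_nonneg (sub_nonneg.2 h)]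
    exact cl_lip h

lemma cop_abs_u (hC : IsCopula C) {v a a' : ℝ} (hv : v ∈ Icc (0:ℝ) 1)
    (ha : a ∈ Icc (0:ℝ) 1) (ha' : a' ∈ Icc (0:ℝ) 1) : |C a v - C a' v| ≤ |a - a'| := by
  rcases le_total a' a with h | h
  · rw [abs_of_nonneg (sub_nonneg.2 (cop_mono_u hC v hv a' ha' a ha h)),
      abs_of_nonneg (sub_nonneg.2 h)]
    exact cop_lip_u hC v hv a' ha' a ha h
  · rw [abs_sub_comm, abs_sub_comm a a',
      abs_of_nonneg (sub_nonneg.2 (cop_mono_u hC v hv a ha a' ha' h)),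
      abs_of_nonneg (sub_nonneg.2 h)]
    exact cop_lip_u hC v hv a ha a' ha' h

lemma cop_abs_v (hC : IsCopula C) {u b b' : ℝ} (hu : u ∈ Icc (0:ℝ) 1)
    (hb : b ∈ Icc (0:ℝ) 1) (hb' : b' ∈ Icc (0:ℝ) 1) : |C u b - C u b'| ≤ |b - b'| := by
  rcases le_total b' b with h | h
  · rw [abs_of_nonneg (sub_nonneg.2 (cop_mono_v hC u hu b' hb' b hb h)),
      abs_of_nonneg (sub_nonneg.2 h)]
    exact cop_lip_v hC u hu b' hb' b hb h
  · rw [abs_sub_comm, abs_sub_comm b b',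
      abs_of_nonneg (sub_nonneg.2 (cop_mono_v hC u hu b hb b' hb' h)),
      abs_of_nonneg (sub_nonneg.2 h)]
    exact cop_lip_v hC u hu b hb b' hb' h

lemma FF_mono (hC : IsCopula C) (v : ℝ) : Monotone (FF C v) := by
  intro s t hst
  exact cop_mono_u hC (cl v) (cl_mem v) (cl s) (cl_mem s) (cl t) (cl_mem t) (cl_mono hst)

lemma FF_antilip (hC : IsCopula C) (v : ℝ) : Monotone (fun t => t - FF C v t) := by
  intro s t hst
  have h1 : FF C v t - FF C v s ≤ cl t - cl s :=
    cop_lip_u hC (cl v) (cl_mem v) (cl s) (cl_mem s) (cl t) (cl_mem t) (cl_mono hst)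
  have h2 := cl_lip hst
  simp only []
  linarith

lemma FF_cont_uncurry (hC : IsCopula C) : Continuous (Function.uncurry (FF C)) := by
  have : LipschitzWith 2 (Function.uncurry (FF C)) := by
    apply LipschitzWith.of_dist_le_mul
    intro p q
    have key : |FF C p.1 p.2 - FF C q.1 q.2| ≤ |p.2 - q.2| + |p.1 - q.1| := by
      have h1 : |C (cl p.2) (cl p.1) - C (cl q.2) (cl p.1)| ≤ |cl p.2 - cl q.2| :=
        cop_abs_u hC (cl_mem p.1) (cl_mem p.2) (cl_mem q.2)
      have h2 : |C (cl q.2) (cl p.1) - C (cl q.2) (cl q.1)| ≤ |cl p.1 - cl q.1| :=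
        cop_abs_v hC (cl_mem q.2) (cl_mem p.1) (cl_mem q.1)
      have h3 := cl_abs p.2 q.2
      have h4 := cl_abs p.1 q.1
      calc |FF C p.1 p.2 - FF C q.1 q.2|
          = |(C (cl p.2) (cl p.1) - C (cl q.2) (cl p.1))
              + (C (cl q.2) (cl p.1) - C (cl q.2) (cl q.1))| := by
            unfold FF; ring_nf
        _ ≤ |C (cl p.2) (cl p.1) - C (cl q.2) (cl p.1)|
              + |C (cl q.2) (cl p.1) - C (cl q.2) (cl q.1)| := abs_add_le _ _
        _ ≤ |p.2 - q.2| + |p.1 - q.1| := by linarith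
    rw [Function.uncurry, Prod.dist_eq, Real.dist_eq, Real.dist_eq, Real.dist_eq]
    have m1 : |p.1 - q.1| ≤ max |p.1 - q.1| |p.2 - q.2| := le_max_left _ _
    have m2 : |p.2 - q.2| ≤ max |p.1 - q.1| |p.2 - q.2| := le_max_right _ _
    push_cast
    calc |FF C p.1 p.2 - FF C q.1 q.2| ≤ |p.2 - q.2| + |p.1 - q.1| := key
      _ ≤ 2 * max |p.1 - q.1| |p.2 - q.2| := by linarith
  exact this.continuous

lemma FF_cont (hC : IsCopula C) (v : ℝ) : Continuous (FF C v) :=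
  (FF_cont_uncurry hC).comp (Continuous.prodMk_right v)

lemma FF_zero (hC : IsCopula C) (v : ℝ) : FF C v 0 = 0 := by
  unfold FF
  rw [cl_eq ⟨le_refl 0, zero_le_one⟩]
  exact (hC.2.2.1 (cl v) (cl_mem v)).1

lemma FF_one (hC : IsCopula C) {v : ℝ} (hv : v ∈ Icc (0:ℝ) 1) : FF C v 1 = v := by
  unfold FF
  rw [cl_eq ⟨zero_le_one, le_refl 1⟩, cl_eq hv]
  exact (hC.2.2.1 v hv).2

lemma FF_diag {v : ℝ} (hv : v ∈ Icc (0:ℝ) 1) : FF C v v = C v v := by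
  unfold FF
  rw [cl_eq hv]

lemma FF_deriv_eq_d1 {v t : ℝ} (hv : v ∈ Icc (0:ℝ) 1) (ht : t ∈ Ioo (0:ℝ) 1) :
    deriv (FF C v) t = d1 C t v := by
  unfold d1
  apply Filter.EventuallyEq.deriv_eq
  filter_upwards [Ioo_mem_nhds ht.1 ht.2] with s hs
  unfold FF
  rw [cl_eq ⟨hs.1.le, hs.2.le⟩, cl_eq hv]

variable {C : ℝ → ℝ → ℝ}

lemma rho_zero (b : ℝ) (hb2 : b ≤ 1) : rho b 0 = 0 := by
  rw [rho, if_pos (by linarith : (0:ℝ) ≤ 1 - b)]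
  norm_num

lemma rho_one (b : ℝ) (hb1 : 1/2 ≤ b) (hb2 : b ≤ 1) : rho b 1 = 1 - 2*((b-1)/b) := by
  have hb0 : (0:ℝ) < b := by linarith
  rw [rho, if_neg (by intro h; linarith)]
  rcases eq_or_lt_of_le hb2 with h | h
  · rw [if_pos (by linarith)]
    subst h
    norm_num
  · rw [if_neg (by intro h'; linarith)]
    norm_num

lemma rho_intervalIntegrable (b : ℝ) (hb1 : 1/2 ≤ b) (hb2 : b ≤ 1) :
    IntervalIntegrable (rho b) volume 0 1 := by
  have hb0 : (0:ℝ) < b := by linarith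
  have h01 : (0:ℝ) ≤ 1 - b := by linarith
  have h1b : (1:ℝ) - b ≤ b := by linarith
  have int1 : IntervalIntegrable (rho b) volume 0 (1-b) := by
    rw [intervalIntegrable_iff_integrableOn_Ioc_of_le h01]
    have hg : IntegrableOn (fun v => v^2/(1-v)) (Ioc (0:ℝ) (1-b)) volume := by
      apply ContinuousOn.integrableOn_Icc (by
        apply ContinuousOn.div (by fun_prop) (by fun_prop)
        intro v hv
        have : v ≤ 1 - b := hv.2
        intro hcon; have : v = 1 := by linarith
        linarith [hv.2, this]) |>.mono_set Ioc_subset_Icc_self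
    apply hg.congr_fun ?_ measurableSet_Ioc
    intro v hv
    rw [rho, if_pos hv.2]
  have int2 : IntervalIntegrable (rho b) volume (1-b) b := by
    rw [intervalIntegrable_iff_integrableOn_Ioc_of_le h1b]
    have hg : IntegrableOn (fun v => (1-(b-1)/b)^2 * v^2 - ((b-1)/b)^2 * v)
        (Ioc (1-b) b) volume := by
      apply (ContinuousOn.integrableOn_Icc (by fun_prop)).mono_set Ioc_subset_Icc_self
    apply hg.congr_fun ?_ measurableSet_Ioc
    intro v hv
    rw [rho, if_neg (by push_neg; exact hv.1), if_pos hv.2]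
  have int3 : IntervalIntegrable (rho b) volume b 1 := by
    rw [intervalIntegrable_iff_integrableOn_Ioc_of_le hb2]
    have hg : IntegrableOn (fun v => (2*v-1)^2/v + (1-v) - 2*((b-1)/b)*(2*v-1))
        (Ioc b 1) volume := by
      apply ContinuousOn.integrableOn_Icc (by
        apply ContinuousOn.sub
        apply ContinuousOn.add
        · apply ContinuousOn.div (by fun_prop) (by fun_prop)
          intro v hv
          have : b ≤ v := hv.1
          exact ne_of_gt (by linarith)
        · fun_prop
        · fun_prop) |>.mono_set Ioc_subset_Icc_self
    apply hg.congr_fun ?_ measurableSet_Ioc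
    intro v hv
    rw [rho, if_neg (by push_neg; linarith [hv.1]), if_neg (by push_neg; linarith [hv.1])]
  exact (int1.trans int2).trans int3

lemma xi_lower (hC : IsCopula C) (b : ℝ) (hb1 : 1/2 ≤ b) (hb2 : b ≤ 1) :
    2*((b-1)/b) * (∫ v in (0:ℝ)..1, C v v) + (∫ v in (0:ℝ)..1, rho b v)
      ≤ ∫ v in (0:ℝ)..1, ∫ t in (0:ℝ)..1, (d1 C t v)^2 := by
  have hb0 : (0:ℝ) < b := by linarith
  set κ := (b-1)/b with hκ
  set J : ℝ → ℝ := fun v => ∫ t in (0:ℝ)..1, (deriv (FF C v) t)^2 with hJ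
  have hae1 : ∀ᵐ (t:ℝ) ∂volume, t ≠ 1 := by
    have : volume ({(1:ℝ)} : Set ℝ) = 0 := measure_singleton 1
    exact measure_eq_zero_iff_ae_notMem.mp this
  -- equality of inner integrals
  have hIJ : ∀ v ∈ Icc (0:ℝ) 1, (∫ t in (0:ℝ)..1, (d1 C t v)^2) = J v := by
    intro v hv
    apply intervalIntegral.integral_congr_ae
    filter_upwards [hae1] with t ht1 htmem
    rw [Set.uIoc_of_le (zero_le_one)] at htmem
    have htIoo : t ∈ Ioo (0:ℝ) 1 := ⟨htmem.1, lt_of_le_of_ne htmem.2 ht1⟩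
    rw [FF_deriv_eq_d1 hv htIoo]
  -- pointwise lower bound
  have hJB : ∀ v ∈ Icc (0:ℝ) 1, 2*κ*(FF C v v) + rho b v ≤ J v := by
    intro v hv
    rcases eq_or_lt_of_le hv.1 with h0 | h0
    · -- v = 0
      rw [← h0, FF_zero hC 0, rho_zero b hb2]
      simp only [mul_zero, add_zero, zero_add]
      exact intervalIntegral.integral_nonneg zero_le_one (fun t _ => sq_nonneg _)
    rcases eq_or_lt_of_le hv.2 with h1 | h1
    · -- v = 1
      rw [h1]
      rw [FF_one hC ⟨zero_le_one, le_refl 1⟩, rho_one b hb1 hb2]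
      have hs := seg_bound (FF C 1) (FF_mono hC 1) (FF_antilip hC 1) (FF_cont hC 1)
        0 1 1 zero_le_one zero_le_one
      rw [FF_one hC ⟨zero_le_one, le_refl 1⟩, FF_zero hC 1] at hs
      have : (1:ℝ) ≤ ∫ t in (0:ℝ)..1, (deriv (FF C 1) t)^2 := by
        calc (1:ℝ) = 2*1*(1 - 0) - 1^2*(1-0) := by norm_num
          _ ≤ _ := hs
      calc 2*κ*1 + (1 - 2*κ) = 1 := by ring
        _ ≤ J 1 := this
    -- v ∈ Ioo 0 1
    have hvIoo : v ∈ Ioo (0:ℝ) 1 := ⟨h0, h1⟩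
    have hcs := sq_integral_lower (FF C v) (FF_mono hC v) (FF_antilip hC v) (FF_cont hC v)
      v hvIoo
    rw [FF_zero hC v, FF_one hC hv, FF_diag hv, sub_zero] at hcs
    have hkey := rho_key b hb1 hb2 v (C v v) hvIoo
      (cop_diag_nonneg hC v hv) (cop_diag_ge hC v hv) (cop_diag_le hC v hv)
    rw [FF_diag hv]
    calc 2*κ*(C v v) + rho b v ≤ (C v v)^2/v + (v - C v v)^2/(1-v) := hkey
      _ ≤ J v := hcs
  -- measurability and integrability of J
  have hKmeas : Measurable (fun p : ℝ × ℝ => deriv (FF C p.1) p.2) :=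
    measurable_deriv_with_param (FF_cont_uncurry hC)
  have hJ'm : StronglyMeasurable (fun v => ∫ t, (deriv (FF C v) t)^2
      ∂(volume.restrict (Ioc (0:ℝ) 1))) := by
    apply StronglyMeasurable.integral_prod_right' (f := fun p : ℝ × ℝ => (deriv (FF C p.1) p.2)^2)
    exact ((hKmeas.pow_const 2).stronglyMeasurable)
  have hJeq : J = fun v => ∫ t, (deriv (FF C v) t)^2 ∂(volume.restrict (Ioc (0:ℝ) 1)) := by
    funext v
    show (∫ t in (0:ℝ)..1, (deriv (FF C v) t)^2) = _
    rw [intervalIntegral.integral_of_le zero_le_one]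
  have hJbound : ∀ v, 0 ≤ J v ∧ J v ≤ 1 := by
    intro v
    constructor
    · exact intervalIntegral.integral_nonneg zero_le_one (fun t _ => sq_nonneg _)
    · have : ∫ t in (0:ℝ)..1, (deriv (FF C v) t)^2 ≤ ∫ t in (0:ℝ)..1, (1:ℝ) := by
        apply intervalIntegral.integral_mono_on zero_le_one
          (derivsq_intervalIntegrable (FF C v) (FF_mono hC v) (FF_antilip hC v) 0 1)
          intervalIntegrable_const
        intro t _
        have := deriv_mem_Icc (FF C v) (FF_mono hC v) (FF_antilip hC v) t
        nlinarith [this.1, this.2]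
      simpa using this
  have hJint : IntervalIntegrable J volume 0 1 := by
    rw [intervalIntegrable_iff_integrableOn_Ioc_of_le zero_le_one]
    refine Integrable.mono' (g := fun _ => (1:ℝ))
      (integrableOn_const measure_Ioc_lt_top.ne)
      ?_ (ae_of_all _ fun v => ?_)
    · rw [hJeq]
      exact hJ'm.aestronglyMeasurable
    · rw [Real.norm_eq_abs, abs_le]
      exact ⟨by linarith [(hJbound v).1], (hJbound v).2⟩
  -- integrability of the diagonal
  have hdiagcont : Continuous (fun v => FF C v v) := by
    have : (fun v => FF C v v) = (Function.uncurry (FF C)) ∘ (fun v => (v, v)) := rfl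
    rw [this]
    exact (FF_cont_uncurry hC).comp (continuous_id.prodMk continuous_id)
  have hdiagint : IntervalIntegrable (fun v => FF C v v) volume 0 1 :=
    hdiagcont.intervalIntegrable 0 1
  have hBint : IntervalIntegrable (fun v => 2*κ*(FF C v v) + rho b v) volume 0 1 :=
    (hdiagint.const_mul _).add (rho_intervalIntegrable b hb1 hb2)
  -- main comparison
  have hmono : ∫ v in (0:ℝ)..1, (2*κ*(FF C v v) + rho b v) ≤ ∫ v in (0:ℝ)..1, J v :=
    intervalIntegral.integral_mono_on zero_le_one hBint hJint
      (fun v hv => hJB v hv)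
  have hsplit : ∫ v in (0:ℝ)..1, (2*κ*(FF C v v) + rho b v)
      = 2*κ*(∫ v in (0:ℝ)..1, FF C v v) + ∫ v in (0:ℝ)..1, rho b v := by
    rw [intervalIntegral.integral_add (hdiagint.const_mul _) (rho_intervalIntegrable b hb1 hb2),
      intervalIntegral.integral_const_mul]
  have hdiag_eq : ∫ v in (0:ℝ)..1, FF C v v = ∫ v in (0:ℝ)..1, C v v := by
    apply intervalIntegral.integral_congr
    intro v hv
    rw [Set.uIcc_of_le zero_le_one] at hv
    exact FF_diag hv
  have houter : ∫ v in (0:ℝ)..1, (∫ t in (0:ℝ)..1, (d1 C t v)^2) = ∫ v in (0:ℝ)..1, J v := by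
    apply intervalIntegral.integral_congr
    intro v hv
    rw [Set.uIcc_of_le zero_le_one] at hv
    exact hIJ v hv
  rw [houter, ← hdiag_eq]
  linarith [hmono, hsplit]

lemma char_of_cubic (y μ : ℝ) (hμ : μ ∈ Icc (0:ℝ) 2)
    (hcubic : μ ^ 3 - (4 + 2 * y) * μ ^ 2 - (4 + 8 * y) * μ - 8 * y = 0) :
    y = -2 * (2 / (2 + μ)) ^ 2 + 6 * (2 / (2 + μ)) - 5 + 1 / (2 / (2 + μ)) := by
  have h2 : (0:ℝ) < 2 + μ := by linarith [hμ.1]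
  have key : (-2 * (2 / (2 + μ)) ^ 2 + 6 * (2 / (2 + μ)) - 5 + 1 / (2 / (2 + μ))) - y
      = (μ ^ 3 - (4 + 2 * y) * μ ^ 2 - (4 + 8 * y) * μ - 8 * y) / (2 * (2 + μ)^2) := by
    field_simp
    ring
  rw [hcubic] at key
  simp at key
  linarith

lemma cubic_exists (y : ℝ) (hy : y ∈ Icc (-(1/2) : ℝ) 0) :
    ∃ μ ∈ Icc (0:ℝ) 2, μ ^ 3 - (4 + 2 * y) * μ ^ 2 - (4 + 8 * y) * μ - 8 * y = 0 := by
  set p : ℝ → ℝ := fun μ => μ ^ 3 - (4 + 2 * y) * μ ^ 2 - (4 + 8 * y) * μ - 8 * y with hp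
  have hcont : ContinuousOn p (Icc (0:ℝ) 2) := by fun_prop
  have h0 : p 0 = -8*y := by
    show (0:ℝ) ^ 3 - (4 + 2 * y) * 0 ^ 2 - (4 + 8 * y) * 0 - 8 * y = -8*y
    ring
  have h2 : p 2 = -16 - 32*y := by
    show (2:ℝ) ^ 3 - (4 + 2 * y) * 2 ^ 2 - (4 + 8 * y) * 2 - 8 * y = -16 - 32*y
    ring
  have hmem : (0:ℝ) ∈ Icc (p 2) (p 0) := by
    rw [h0, h2]
    constructor <;> [linarith [hy.1]; linarith [hy.2]]
  have := intermediate_value_Icc' (by norm_num : (0:ℝ) ≤ 2) hcont hmem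
  obtain ⟨μ, hμmem, hμval⟩ := this
  exact ⟨μ, hμmem, hμval⟩

lemma cubic_unique (y : ℝ) (hy : y ∈ Icc (-(1/2) : ℝ) 0) (m₁ m₂ : ℝ)
    (h₁ : m₁ ∈ Icc (0:ℝ) 2) (h₂ : m₂ ∈ Icc (0:ℝ) 2)
    (hc₁ : m₁ ^ 3 - (4 + 2 * y) * m₁ ^ 2 - (4 + 8 * y) * m₁ - 8 * y = 0)
    (hc₂ : m₂ ^ 3 - (4 + 2 * y) * m₂ ^ 2 - (4 + 8 * y) * m₂ - 8 * y = 0) : m₁ = m₂ := by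
  -- via strict monotonicity of the characterization
  have e₁ := char_of_cubic y m₁ h₁ hc₁
  have e₂ := char_of_cubic y m₂ h₂ hc₂
  by_contra hne
  -- wlog m₁ < m₂
  have key : ∀ a b : ℝ, a ∈ Icc (0:ℝ) 2 → b ∈ Icc (0:ℝ) 2 → a < b →
      (-2 * (2 / (2 + b)) ^ 2 + 6 * (2 / (2 + b)) - 5 + 1 / (2 / (2 + b)))
      < (-2 * (2 / (2 + a)) ^ 2 + 6 * (2 / (2 + a)) - 5 + 1 / (2 / (2 + a))) := by
    intro a b ha hb hab
    set s : ℝ := 2 + a with hs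
    set t : ℝ := 2 + b with ht
    have hs2 : (2:ℝ) ≤ s := by simp [hs]; linarith [ha.1]
    have ht4 : t ≤ 4 := by simp [ht]; linarith [hb.2]
    have hst : s < t := by simp [hs, ht]; linarith
    have hs0 : (0:ℝ) < s := by linarith
    have ht0 : (0:ℝ) < t := by linarith
    have hP : 0 < -16*(s+t) + 24*s*t - s^2*t^2 := by
      nlinarith [mul_nonneg (by linarith : (0:ℝ) ≤ 4 - s) (by linarith : (0:ℝ) ≤ 4 - t),
        mul_pos (by linarith : (0:ℝ) < s - 2 + (t - s)) hs0,
        (by nlinarith : (4:ℝ) < s*t), (by nlinarith : s*t < 16)]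
    have hdiff : (-2 * (2 / (2 + a)) ^ 2 + 6 * (2 / (2 + a)) - 5 + 1 / (2 / (2 + a)))
        - (-2 * (2 / (2 + b)) ^ 2 + 6 * (2 / (2 + b)) - 5 + 1 / (2 / (2 + b)))
        = (t - s) * (-16*(s+t) + 24*s*t - s^2*t^2) / (2*s^2*t^2) := by
      rw [hs, ht]
      have : (2:ℝ) + a ≠ 0 := by linarith [ha.1]
      have : (2:ℝ) + b ≠ 0 := by linarith [hb.1]
      field_simp
      ring
    have hpos : 0 < (t - s) * (-16*(s+t) + 24*s*t - s^2*t^2) / (2*s^2*t^2) := by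
      apply div_pos (mul_pos (by linarith) hP)
      positivity
    linarith
  rcases lt_or_gt_of_ne hne with h | h
  · have := key m₁ m₂ h₁ h₂ h
    rw [← e₁, ← e₂] at this
    exact lt_irrefl y this
  · have := key m₂ m₁ h₂ h₁ h
    rw [← e₁, ← e₂] at this
    exact lt_irrefl y this

lemma rho_total (b : ℝ) (hb1 : 1/2 ≤ b) (hb2 : b ≤ 1) :
    ∫ v in (0:ℝ)..1, rho b v
      = (-(1-b)^2/2 - (1-b) - Real.log b)
        + ((1-(b-1)/b)^2 * (b^3-(1-b)^3)/3 - ((b-1)/b)^2 * (b^2-(1-b)^2)/2)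
        + (-3/2 - ((3/2)*b^2 - 3*b + Real.log b - 2*((b-1)/b)*b^2 + 2*((b-1)/b)*b)) := by
  have hall := rho_intervalIntegrable b hb1 hb2
  have hsub : ∀ x y_ : ℝ, 0 ≤ x → x ≤ y_ → y_ ≤ 1 → IntervalIntegrable (rho b) volume x y_ := by
    intro x y_ hx hxy hy1
    apply hall.mono_set
    rw [Set.uIcc_of_le (by linarith), Set.uIcc_of_le (by norm_num : (0:ℝ) ≤ 1)]
    exact Icc_subset_Icc (by linarith) (by linarith)
  have int1 := hsub 0 (1-b) le_rfl (by linarith) (by linarith)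
  have int2 := hsub (1-b) b (by linarith) (by linarith) (by linarith)
  have int3 := hsub b 1 (by linarith) (by linarith) le_rfl
  rw [← intervalIntegral.integral_add_adjacent_intervals (int1.trans int2) int3,
    ← intervalIntegral.integral_add_adjacent_intervals int1 int2,
    rho_int1 b hb1 hb2, rho_int2 b hb1 hb2, rho_int3 b hb1 hb2]

lemma final_algebra (b : ℝ) (hb0 : 0 < b) :
    2*((b-1)/b) * ((-2*b^2+6*b-5+1/b) + 2) + 6*((-(1-b)^2/2 - (1-b) - Real.log b)
        + ((1-(b-1)/b)^2 * (b^3-(1-b)^3)/3 - ((b-1)/b)^2 * (b^2-(1-b)^2)/2)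
        + (-3/2 - ((3/2)*b^2 - 3*b + Real.log b - 2*((b-1)/b)*b^2 + 2*((b-1)/b)*b))) - 2
    = -4*b^2 + 20*b - 17 + 2/b - 1/b^2 - 12*Real.log b := by
  have hbne : b ≠ 0 := ne_of_gt hb0
  field_simp
  ring

/-- For `y ∈ [−1/2, 0]`, the cubic `μ³ − (4+2y)μ² − (4+8y)μ − 8y = 0` has a
unique solution `μ(y) ∈ [0,2]`, characterized by `y = −2v₁² + 6v₁ − 5 + 1/v₁` with
`v₁ = 2/(2+μ(y))`; and every copula `C` with `ψ(C) = y` satisfies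
`ξ(C) ≥ −4v₁² + 20v₁ − 17 + 2/v₁ − 1/v₁² − 12·ln v₁`. -/
theorem lower_bound_via_cubic (y : ℝ) (hy : y ∈ Icc (-(1/2) : ℝ) 0) :
    (∃! μ : ℝ, μ ∈ Icc (0:ℝ) 2 ∧
      μ ^ 3 - (4 + 2 * y) * μ ^ 2 - (4 + 8 * y) * μ - 8 * y = 0) ∧
    (∀ μ ∈ Icc (0:ℝ) 2,
      μ ^ 3 - (4 + 2 * y) * μ ^ 2 - (4 + 8 * y) * μ - 8 * y = 0 →
        (y = -2 * (2 / (2 + μ)) ^ 2 + 6 * (2 / (2 + μ)) - 5 + 1 / (2 / (2 + μ))) ∧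
        ∀ C : ℝ → ℝ → ℝ, IsCopula C → psi C = y →
          xi C ≥ -4 * (2 / (2 + μ)) ^ 2 + 20 * (2 / (2 + μ)) - 17 + 2 / (2 / (2 + μ))
            - 1 / (2 / (2 + μ)) ^ 2 - 12 * Real.log (2 / (2 + μ))) := by
  constructor
  · obtain ⟨μ₀, hmem, hroot⟩ := cubic_exists y hy
    exact ⟨μ₀, ⟨hmem, hroot⟩, fun μ' h' => cubic_unique y hy μ' μ₀ h'.1 hmem h'.2 hroot⟩
  · intro μ hμ hcubic
    have hchar := char_of_cubic y μ hμ hcubic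
    refine ⟨hchar, ?_⟩
    intro C hCop hpsi
    have h2μ : (0:ℝ) < 2 + μ := by linarith [hμ.1]
    set b : ℝ := 2 / (2 + μ) with hbdef
    have hb1 : 1/2 ≤ b := by
      rw [hbdef, le_div_iff₀ h2μ]
      linarith [hμ.2]
    have hb2 : b ≤ 1 := by
      rw [hbdef, div_le_one h2μ]
      linarith [hμ.1]
    have hb0 : (0:ℝ) < b := by linarith
    have hS : ∫ v in (0:ℝ)..1, C v v = (y+2)/6 := by
      have : psi C = 6 * (∫ v in (0:ℝ)..1, C v v) - 2 := rfl
      rw [hpsi] at this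
      linarith
    have hxl := xi_lower hCop b hb1 hb2
    rw [rho_total b hb1 hb2, hS] at hxl
    have hyb : y = -2*b^2 + 6*b - 5 + 1/b := by
      rw [hchar]
    have hfa := final_algebra b hb0
    rw [← hyb] at hfa
    have hxi : xi C = 6 * (∫ v in (0:ℝ)..1, ∫ t in (0:ℝ)..1, (d1 C t v) ^ 2) - 2 := rfl
    rw [ge_iff_le]
    calc -4 * b ^ 2 + 20 * b - 17 + 2 / b - 1 / b ^ 2 - 12 * Real.log b
        = -4*b^2 + 20*b - 17 + 2/b - 1/b^2 - 12*Real.log b := by ring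
      _ = 2*((b-1)/b) * (y + 2) + 6*((-(1-b)^2/2 - (1-b) - Real.log b)
            + ((1-(b-1)/b)^2 * (b^3-(1-b)^3)/3 - ((b-1)/b)^2 * (b^2-(1-b)^2)/2)
            + (-3/2 - ((3/2)*b^2 - 3*b + Real.log b - 2*((b-1)/b)*b^2 + 2*((b-1)/b)*b))) - 2 := by
          rw [hfa]
      _ ≤ 6 * (∫ v in (0:ℝ)..1, ∫ t in (0:ℝ)..1, (d1 C t v) ^ 2) - 2 := by linarith
      _ = xi C := hxi.symm
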